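/- Let G be a finite simple graph, let H be an induced subgraph of G, and let n ≥ 1. If I(G)^n is bridge-friendly, then I(H)^n is bridge-friendly. -/
import Mathlib


open scoped Classical

noncomputable section

namespace ChauHaMaithani

variable {V : Type*}

/-- The lcm of a finite set of monomials (exponent vectors): pointwise maximum. -/
def mlcm (σ : Finset (V → ℕ)) : V → ℕ := fun v => σ.sup fun g => g v

/-- `m` is a bridge of `σ`: `m ∈ σ` and dropping `m` does not change the lcm. -/
def IsBridge (σ : Finset (V → ℕ)) (m : V → ℕ) : Prop :=
  m ∈ σ ∧ mlcm (σ.erase m) = mlcm σ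

/-- `m` is a gap of `σ`: `m ∉ σ` and adding `m` does not change the lcm. -/
def IsGap (σ : Finset (V → ℕ)) (m : V → ℕ) : Prop :=
  m ∉ σ ∧ mlcm (insert m σ) = mlcm σ

/-- A total order `≻` on monomials is encoded by a ranking function `ord`:
`m ≻ m'` iff `ord m' < ord m` (injectivity on the generating set is assumed separately).
`m` is a true gap of `σ` if it is a gap and every bridge of `σ ∪ {m}` dominated by `m`
is already a bridge of `σ`. -/
def IsTrueGap (ord : (V → ℕ) → ℕ) (σ : Finset (V → ℕ)) (m : V → ℕ) : Prop :=
  IsGap σ m ∧ ∀ m', IsBridge (insert m σ) m' → ord m' < ord m → IsBridge σ m'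

/-- `σ` is type-1: it has a true gap (in `M`) dominating none of its bridges. -/
def Type1 (M : Finset (V → ℕ)) (ord : (V → ℕ) → ℕ) (σ : Finset (V → ℕ)) : Prop :=
  ∃ m ∈ M, IsTrueGap ord σ m ∧ ∀ b, IsBridge σ b → ¬ ord b < ord m

/-- `σ` is potentially-type-2: it has a bridge dominating none of its true gaps. -/
def PotType2 (M : Finset (V → ℕ)) (ord : (V → ℕ) → ℕ) (σ : Finset (V → ℕ)) : Prop :=
  ∃ b, IsBridge σ b ∧ ∀ m ∈ M, IsTrueGap ord σ m → ¬ ord m < ord b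

/-- `b` is the `≻`-smallest bridge of `σ`. -/
def IsSBridge (ord : (V → ℕ) → ℕ) (σ : Finset (V → ℕ)) (b : V → ℕ) : Prop :=
  IsBridge σ b ∧ ∀ b', IsBridge σ b' → ord b ≤ ord b'

/-- `σ` is type-2. -/
def Type2 (M : Finset (V → ℕ)) (ord : (V → ℕ) → ℕ) (σ : Finset (V → ℕ)) : Prop :=
  PotType2 M ord σ ∧
    ∀ σ' : Finset (V → ℕ), σ' ⊆ M → σ' ≠ σ → PotType2 M ord σ' →
      ∀ b b', IsSBridge ord σ b → IsSBridge ord σ' b' →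
        σ'.erase b' = σ.erase b → ord b < ord b'

/-- `M` (the minimal generating set of a monomial ideal) is bridge-friendly w.r.t. `ord`:
every potentially-type-2 subset is type-2. -/
def BridgeFriendlyWrt (M : Finset (V → ℕ)) (ord : (V → ℕ) → ℕ) : Prop :=
  ∀ σ ⊆ M, PotType2 M ord σ → Type2 M ord σ

/-- `M` is bridge-friendly: bridge-friendly w.r.t. some total order on `M`. -/
def BridgeFriendly (M : Finset (V → ℕ)) : Prop :=
  ∃ ord : (V → ℕ) → ℕ, Set.InjOn ord M ∧ BridgeFriendlyWrt M ord

/-- `σ = {m_1 ≻ ⋯ ≻ m_k} ⊆ M` is Lyubeznik-critical w.r.t. `ord`: there is no `m ∈ M` with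
`m_t ≻ m` and `m ∣ lcm(m_1, …, m_t)` for some `1 < t ≤ k`. -/
def LyubCritical (M : Finset (V → ℕ)) (ord : (V → ℕ) → ℕ) (σ : Finset (V → ℕ)) : Prop :=
  σ ⊆ M ∧ ¬ ∃ m ∈ M, ∃ t ∈ σ, (∃ u ∈ σ, ord t < ord u) ∧ ord m < ord t ∧
      ∀ v, m v ≤ mlcm (σ.filter fun g => ord t ≤ ord g) v

/-- `M` is Lyubeznik: for some total order on `M`, no Lyubeznik-critical subset has a
bridge (equivalently, the associated Lyubeznik resolution is minimal). -/
def IsLyubeznik (M : Finset (V → ℕ)) : Prop :=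
  ∃ ord : (V → ℕ) → ℕ, Set.InjOn ord M ∧
    ∀ σ : Finset (V → ℕ), LyubCritical M ord σ → ∀ b, ¬ IsBridge σ b

/-- The quadratic monomial `xy` attached to an edge `e = {x,y}`. -/
def edgeMon (e : Sym2 V) : V → ℕ := fun v => if v ∈ e then 1 else 0

/-- `mingens(I(G))`: the edge monomials of `G`. -/
def edgeGens [Fintype V] (G : SimpleGraph V) : Finset (V → ℕ) :=
  (Finset.univ.filter fun e : Sym2 V => e ∈ G.edgeSet).image edgeMon

/-- `mingens(I(G)^n)`: the monomials that are products of `n` edges of `G`. -/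
def edgePowGens [Fintype V] (G : SimpleGraph V) (n : ℕ) : Finset (V → ℕ) :=
  (Finset.univ.filter fun f : Fin n → Sym2 V => ∀ i, f i ∈ G.edgeSet).image
    fun f => ∑ i, edgeMon (f i)

/-- A graph is chordal if it contains no induced cycle of length at least 4. -/
def Chordal (G : SimpleGraph V) : Prop :=
  ∀ n, 4 ≤ n → IsEmpty (SimpleGraph.cycleGraph n ↪g G)


/-- Vertex type of the graph `L(a,b,c)`: `Sum.inl 0` is `x`, `Sum.inl 1` is `y`,
and the remaining summands are the leaves `x_i`, the leaves `y_j`, and the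
triangle tips `z_k`. -/
abbrev LV (a b c : ℕ) := Fin 2 ⊕ (Fin a ⊕ Fin b ⊕ Fin c)

/-- The graph `L(a,b,c)`: `c` triangles glued along the common edge `{x,y}`, with
`a` leaves attached to `x` and `b` leaves attached to `y`. -/
def LGraph (a b c : ℕ) : SimpleGraph (LV a b c) :=
  SimpleGraph.fromRel fun u v =>
    (u = Sum.inl 0 ∧ v = Sum.inl 1) ∨
    (∃ i, u = Sum.inl 0 ∧ v = Sum.inr (Sum.inl i)) ∨
    (∃ j, u = Sum.inl 1 ∧ v = Sum.inr (Sum.inr (Sum.inl j))) ∨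
    (∃ k, (u = Sum.inl 0 ∨ u = Sum.inl 1) ∧ v = Sum.inr (Sum.inr (Sum.inr k)))

/-- The graph `BF(T,w)`: attach `w(e)` new triangles along each edge `e` of `T`. -/
def BFGraph {VT : Type} (T : SimpleGraph VT) (w : T.edgeSet → ℕ) :
    SimpleGraph (VT ⊕ (Σ e : T.edgeSet, Fin (w e))) :=
  SimpleGraph.fromRel fun u v =>
    (∃ a b, u = Sum.inl a ∧ v = Sum.inl b ∧ T.Adj a b) ∨
    (∃ (a : VT) (e : T.edgeSet) (i : Fin (w e)), u = Sum.inl a ∧ v = Sum.inr ⟨e, i⟩ ∧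
      a ∈ (e : Sym2 VT))

/-- The kite graph: the diamond (`K₄` minus the edge `{2,3}`) together with a pendant
vertex `4` attached to the degree-two vertex `2`. -/
def kite : SimpleGraph (Fin 5) :=
  SimpleGraph.fromEdgeSet {s(0,1), s(0,2), s(0,3), s(1,2), s(1,3), s(2,4)}

/-- The gem graph: the path `0-1-2-3` together with a vertex `4` adjacent to all of
`0,1,2,3`. -/
def gem : SimpleGraph (Fin 5) :=
  SimpleGraph.fromEdgeSet {s(0,1), s(1,2), s(2,3), s(0,4), s(1,4), s(2,4), s(3,4)}

/-- The tadpole graph: the triangle `0,1,2` with a path `0-3-4` of length 2 attached. -/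
def tadpole : SimpleGraph (Fin 5) :=
  SimpleGraph.fromEdgeSet {s(0,1), s(1,2), s(0,2), s(0,3), s(3,4)}

/-- The butterfly graph: two triangles `0,1,2` and `0,3,4` sharing the vertex `0`. -/
def butterfly : SimpleGraph (Fin 5) :=
  SimpleGraph.fromEdgeSet {s(0,1), s(1,2), s(0,2), s(0,3), s(3,4), s(0,4)}

/-- The net graph: the triangle `0,1,2` with pendant vertices `3,4,5` attached to
`0,1,2` respectively. -/
def net : SimpleGraph (Fin 6) :=
  SimpleGraph.fromEdgeSet {s(0,1), s(1,2), s(0,2), s(0,3), s(1,4), s(2,5)}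


attribute [local instance 2000] Classical.propDecidable

section Push

variable {V W : Type} (f : W → V)

/-- Push a monomial along `f`, extending by zero. -/
def push (m : W → ℕ) : V → ℕ := Function.extend f m (fun _ => 0)

lemma push_apply' (m : W → ℕ) {v : V} (hv : v ∉ Set.range f) : push f m v = 0 :=
  Function.extend_apply' m _ v (fun ⟨a, ha⟩ => hv ⟨a, ha⟩)

variable (hf : Function.Injective f)
include hf

lemma push_apply (m : W → ℕ) (w : W) : push f m (f w) = m w :=
  hf.extend_apply m _ w

lemma push_inj : Function.Injective (push f) := by
  intro m1 m2 h
  funext w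
  have := congrFun h (f w)
  rwa [push_apply f hf, push_apply f hf] at this

lemma push_sum {ι : Type*} (s : Finset ι) (g : ι → W → ℕ) :
    push f (∑ i ∈ s, g i) = ∑ i ∈ s, push f (g i) := by
  funext v
  rw [Finset.sum_apply]
  by_cases hv : v ∈ Set.range f
  · obtain ⟨w, rfl⟩ := hv
    rw [push_apply f hf, Finset.sum_apply]
    exact Finset.sum_congr rfl fun i _ => (push_apply f hf _ _).symm
  · rw [push_apply' f _ hv]
    exact (Finset.sum_eq_zero fun i _ => push_apply' f _ hv).symm

lemma mlcm_image (σ : Finset (W → ℕ)) :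
    mlcm (σ.image (push f)) = push f (mlcm σ) := by
  funext v
  unfold mlcm
  rw [Finset.sup_image]
  by_cases hv : v ∈ Set.range f
  · obtain ⟨w, rfl⟩ := hv
    rw [push_apply f hf]
    exact Finset.sup_congr rfl fun m _ => push_apply f hf m w
  · rw [push_apply' f _ hv]
    exact le_antisymm (Finset.sup_le fun m _ => (push_apply' f _ hv).le) (Nat.zero_le _)

lemma mem_image_push {σ : Finset (W → ℕ)} {m : W → ℕ} :
    push f m ∈ σ.image (push f) ↔ m ∈ σ := by
  constructor
  · intro h
    obtain ⟨m', hm', he⟩ := Finset.mem_image.mp h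
    rwa [← push_inj f hf he]
  · exact fun h => Finset.mem_image_of_mem _ h

lemma isBridge_image {σ : Finset (W → ℕ)} {m : W → ℕ} :
    IsBridge (σ.image (push f)) (push f m) ↔ IsBridge σ m := by
  unfold IsBridge
  rw [mem_image_push f hf, ← Finset.image_erase (push_inj f hf), mlcm_image f hf, mlcm_image f hf,
    (push_inj f hf).eq_iff]

lemma isGap_image {σ : Finset (W → ℕ)} {m : W → ℕ} :
    IsGap (σ.image (push f)) (push f m) ↔ IsGap σ m := by
  unfold IsGap
  rw [mem_image_push f hf, ← Finset.image_insert, mlcm_image f hf, mlcm_image f hf,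
    (push_inj f hf).eq_iff]

lemma bridge_image_exists {σ : Finset (W → ℕ)} {b : V → ℕ}
    (hb : IsBridge (σ.image (push f)) b) :
    ∃ c, c ∈ σ ∧ b = push f c ∧ IsBridge σ c := by
  obtain ⟨c, hc, rfl⟩ := Finset.mem_image.mp hb.1
  exact ⟨c, hc, rfl, (isBridge_image f hf).mp hb⟩

lemma isTrueGap_image (ord : (V → ℕ) → ℕ) {σ : Finset (W → ℕ)} {m : W → ℕ} :
    IsTrueGap (ord ∘ push f) σ m ↔ IsTrueGap ord (σ.image (push f)) (push f m) := by
  unfold IsTrueGap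
  rw [isGap_image f hf]
  refine and_congr_right fun _ => ?_
  constructor
  · intro h m' hm' ho
    rw [← Finset.image_insert] at hm'
    obtain ⟨c, hc, rfl, hcb⟩ := bridge_image_exists f hf hm'
    exact (isBridge_image f hf).mpr (h c (by rwa [Finset.image_insert] at hm') ho)
  · intro h m' hm' ho
    have := h (push f m') (by rw [← Finset.image_insert]; exact (isBridge_image f hf).mpr hm') ho
    exact (isBridge_image f hf).mp this

lemma isSBridge_image (ord : (V → ℕ) → ℕ) {σ : Finset (W → ℕ)} {b : W → ℕ}
    (h : IsSBridge (ord ∘ push f) σ b) :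
    IsSBridge ord (σ.image (push f)) (push f b) := by
  refine ⟨(isBridge_image f hf).mpr h.1, ?_⟩
  intro b' hb'
  obtain ⟨c, _, rfl, hcb⟩ := bridge_image_exists f hf hb'
  exact h.2 c hcb

omit hf

lemma gap_le {σ : Finset (V → ℕ)} {m : V → ℕ} (h : IsGap σ m) (v : V) :
    m v ≤ mlcm σ v := by
  have := congrFun h.2 v
  unfold mlcm at this ⊢
  rw [Finset.sup_insert] at this
  exact le_of_sup_eq this

end Push

section PushGraph

variable {V W : Type} (f : W → V) (hf : Function.Injective f)
include hf

lemma push_edgeMon (e : Sym2 W) :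
    push f (edgeMon e) = edgeMon (Sym2.map f e) := by
  funext v
  by_cases hv : v ∈ Set.range f
  · obtain ⟨w, rfl⟩ := hv
    rw [push_apply _ hf]
    have hmem : f w ∈ Sym2.map f e ↔ w ∈ e := by
      rw [Sym2.mem_map]
      constructor
      · rintro ⟨a, ha, he⟩; rwa [← hf he]
      · exact fun h => ⟨w, h, rfl⟩
    simp [edgeMon, hmem]
  · rw [push_apply' _ _ hv]
    unfold edgeMon
    rw [if_neg]
    intro hmem
    obtain ⟨a, _, rfl⟩ := Sym2.mem_map.mp hmem
    exact hv ⟨a, rfl⟩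

end PushGraph

section Graph

variable {V W : Type} [Fintype V] [Fintype W] {G : SimpleGraph V} {H : SimpleGraph W}

lemma mem_edgePowGens_iff {n : ℕ} {m : V → ℕ} :
    m ∈ edgePowGens G n ↔
      ∃ g : Fin n → Sym2 V, (∀ i, g i ∈ G.edgeSet) ∧ m = ∑ i, edgeMon (g i) := by
  simp only [edgePowGens, Finset.mem_image, Finset.mem_filter, Finset.mem_univ, true_and]
  constructor
  · rintro ⟨g, hg, rfl⟩
    exact ⟨g, hg, rfl⟩
  · rintro ⟨g, hg, rfl⟩
    exact ⟨g, hg, rfl⟩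

variable (f : H ↪g G)

lemma map_edge_mem {e : Sym2 W} (he : e ∈ H.edgeSet) :
    Sym2.map (f : W → V) e ∈ G.edgeSet := by
  refine Sym2.ind (f := fun z => z ∈ H.edgeSet → Sym2.map (f : W → V) z ∈ G.edgeSet)
    (fun a b hab => ?_) e he
  rw [Sym2.map_pair_eq, SimpleGraph.mem_edgeSet]
  exact f.map_rel_iff.mpr ((SimpleGraph.mem_edgeSet _).mp hab)

lemma exists_edge_preimage {e : Sym2 V} (he : e ∈ G.edgeSet)
    (hr : ∀ v ∈ e, v ∈ Set.range (f : W → V)) :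
    ∃ e' ∈ H.edgeSet, Sym2.map (f : W → V) e' = e := by
  refine Sym2.ind (f := fun z => z ∈ G.edgeSet → (∀ v ∈ z, v ∈ Set.range (f : W → V)) →
    ∃ e' ∈ H.edgeSet, Sym2.map (f : W → V) e' = z) (fun x y hxy hrxy => ?_) e he hr
  obtain ⟨a, ha⟩ := hrxy x (by simp)
  obtain ⟨b, hb⟩ := hrxy y (by simp)
  subst ha hb
  refine ⟨s(a, b), ?_, by rw [Sym2.map_pair_eq]⟩
  exact (SimpleGraph.mem_edgeSet _).mpr (f.map_rel_iff.mp ((SimpleGraph.mem_edgeSet _).mp hxy))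

lemma push_mem_edgePowGens {n : ℕ} {m : W → ℕ} (hm : m ∈ edgePowGens H n) :
    push (f : W → V) m ∈ edgePowGens G n := by
  obtain ⟨g, hg, rfl⟩ := mem_edgePowGens_iff.mp hm
  rw [push_sum _ f.injective]
  refine mem_edgePowGens_iff.mpr ⟨fun i => Sym2.map f (g i), fun i => map_edge_mem f (hg i), ?_⟩
  exact Finset.sum_congr rfl fun i _ => push_edgeMon _ f.injective (g i)

lemma exists_preimage_of_support {n : ℕ} {m : V → ℕ} (hm : m ∈ edgePowGens G n)
    (hsupp : ∀ v, v ∉ Set.range (f : W → V) → m v = 0) :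
    ∃ m', m' ∈ edgePowGens H n ∧ m = push (f : W → V) m' := by
  obtain ⟨g, hg, rfl⟩ := mem_edgePowGens_iff.mp hm
  have hrange : ∀ i, ∀ v ∈ g i, v ∈ Set.range (f : W → V) := by
    intro i v hv
    by_contra hvr
    have h0 := hsupp v hvr
    rw [Finset.sum_apply] at h0
    have h1 : edgeMon (g i) v ≤ ∑ j, edgeMon (g j) v :=
      Finset.single_le_sum (f := fun j => edgeMon (g j) v) (fun j _ => Nat.zero_le _)
        (Finset.mem_univ i)
    rw [h0] at h1
    simp only [edgeMon, if_pos hv] at h1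
    exact Nat.not_succ_le_zero 0 h1
  choose e he1 he2 using fun i => exists_edge_preimage f (hg i) (hrange i)
  refine ⟨∑ i, edgeMon (e i), mem_edgePowGens_iff.mpr ⟨e, he1, rfl⟩, ?_⟩
  rw [push_sum _ f.injective]
  refine Finset.sum_congr rfl fun i _ => ?_
  rw [push_edgeMon _ f.injective, he2]

lemma potType2_image (ord : (V → ℕ) → ℕ) {n : ℕ} {σ : Finset (W → ℕ)}
    (h : PotType2 (edgePowGens H n) (ord ∘ push (f : W → V)) σ) :
    PotType2 (edgePowGens G n) ord (σ.image (push (f : W → V))) := by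
  obtain ⟨b, hb, hgaps⟩ := h
  have hf : Function.Injective (f : W → V) := f.injective
  refine ⟨push (f : W → V) b, (isBridge_image _ hf).mpr hb, ?_⟩
  intro m' hm' htg
  have hsupp : ∀ v, v ∉ Set.range (f : W → V) → m' v = 0 := by
    intro v hv
    have h1 := gap_le htg.1 v
    rw [mlcm_image _ hf, push_apply' _ _ hv] at h1
    exact Nat.le_zero.mp h1
  obtain ⟨m, hmH, rfl⟩ := exists_preimage_of_support f hm' hsupp
  exact hgaps m hmH ((isTrueGap_image _ hf ord).mpr htg)

end Graph

/-- **Corollary 2.15.** If `H` is an induced subgraph of `G` and `I(G)^n` is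
bridge-friendly, then so is `I(H)^n`. -/
theorem inducedSubgraph_bridgeFriendly {V W : Type} [Fintype V] [Fintype W]
    (G : SimpleGraph V) (H : SimpleGraph W) (f : H ↪g G) (n : ℕ) (hn : 1 ≤ n)
    (h : BridgeFriendly (edgePowGens G n)) :
    BridgeFriendly (edgePowGens H n) := by
  obtain ⟨ord, hinj, hbf⟩ := h
  have hf : Function.Injective (f : W → V) := f.injective
  refine ⟨ord ∘ push (f : W → V), ?_, ?_⟩
  · intro m1 h1 m2 h2 he
    exact push_inj _ hf (hinj (Finset.mem_coe.mpr (push_mem_edgePowGens f (Finset.mem_coe.mp h1)))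
      (Finset.mem_coe.mpr (push_mem_edgePowGens f (Finset.mem_coe.mp h2))) he)
  · intro σ hσ hpot
    have hSig : σ.image (push (f : W → V)) ⊆ edgePowGens G n :=
      Finset.image_subset_iff.mpr fun m hm => push_mem_edgePowGens f (hσ hm)
    obtain ⟨_, hmin⟩ := hbf _ hSig (potType2_image f ord hpot)
    refine ⟨hpot, ?_⟩
    intro σ' hσ' hne hpot' b b' hsb hsb' her
    refine hmin (σ'.image (push (f : W → V)))
      (Finset.image_subset_iff.mpr fun m hm => push_mem_edgePowGens f (hσ' hm)) ?_
      (potType2_image f ord hpot') (push (f : W → V) b) (push (f : W → V) b')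
      (isSBridge_image _ hf ord hsb) (isSBridge_image _ hf ord hsb') ?_
    · intro hEq
      exact hne (Finset.image_injective (push_inj _ hf) hEq)
    · rw [← Finset.image_erase (push_inj _ hf), ← Finset.image_erase (push_inj _ hf), her]

end ChauHaMaithani
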